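/- Let A and B be uniform algebras. For peaking functions f, g of A, the inclusion L_f ⊆ L_g holds if and only if for every peaking function u of A with 1 ∈ Ran_π(fu), one has 1 ∈ Ran_π(ug). -/

import Mathlib

/-- The peripheral range of a continuous function on a compact space. -/
def Ranπ {X : Type*} [TopologicalSpace X] [CompactSpace X] (f : C(X, ℂ)) : Set ℂ :=
  {z | z ∈ Set.range f ∧ ‖z‖ = ‖f‖}

/-- Compatibility: the complex absolute value, as an absolute value. -/
noncomputable def Complex.abs : AbsoluteValue ℂ ℝ := IsAbsoluteValue.toAbsoluteValue (norm : ℂ → ℝ)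

@[simp] lemma Complex.abs_apply (z : ℂ) : Complex.abs z = ‖z‖ := rfl

lemma Complex.norm_eq_abs (z : ℂ) : ‖z‖ = Complex.abs z := rfl

lemma Complex.sq_abs (z : ℂ) : Complex.abs z ^ 2 = Complex.normSq z := Complex.sq_norm z

lemma Complex.abs_ofReal (r : ℝ) : Complex.abs (r : ℂ) = |r| := Complex.norm_real r

lemma Complex.abs_exp (z : ℂ) : Complex.abs (Complex.exp z) = Real.exp z.re := Complex.norm_exp z

lemma Complex.continuous_abs : Continuous Complex.abs := continuous_norm

section helpers
variable {X : Type*} [TopologicalSpace X] [CompactSpace X]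

lemma peak_norm (f : C(X,ℂ)) (hf : Ranπ f = {1}) : ‖f‖ = 1 := by
  have h1 : (1:ℂ) ∈ Ranπ f := by rw [hf]; rfl
  simpa using h1.2.symm

lemma peak_abs_le (f : C(X,ℂ)) (hf : Ranπ f = {1}) (x : X) : Complex.abs (f x) ≤ 1 := by
  rw [← peak_norm f hf]; exact ContinuousMap.norm_coe_le_norm f x

lemma peak_eq_one (f : C(X,ℂ)) (hf : Ranπ f = {1}) (x : X)
    (h : Complex.abs (f x) = 1) : f x = 1 := by
  have : f x ∈ Ranπ f := ⟨⟨x, rfl⟩, by rw [peak_norm f hf]; exact h⟩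
  rwa [hf] at this

lemma disc_one {w : ℂ} (h1 : Complex.abs w ≤ 1) (h2 : Complex.abs (1 + w) = 2) : w = 1 := by
  have h3 : Complex.abs w = 1 := by
    have := Complex.abs.add_le 1 w
    simp only [Complex.abs.map_one] at this
    have h4 : (2:ℝ) ≤ 1 + Complex.abs w := h2 ▸ this
    linarith
  have hsq : Complex.abs (1 + w) ^ 2 = 4 := by rw [h2]; norm_num
  rw [Complex.sq_abs, Complex.normSq_apply] at hsq
  have hsq2 : Complex.abs w ^ 2 = 1 := by rw [h3]; norm_num
  rw [Complex.sq_abs, Complex.normSq_apply] at hsq2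
  simp only [Complex.add_re, Complex.add_im, Complex.one_re, Complex.one_im] at hsq
  have hre : w.re = 1 := by nlinarith
  have him : w.im = 0 := by nlinarith
  exact Complex.ext hre him

lemma mem_of_hasSum (A : Subalgebra ℂ C(X, ℂ)) (hA : IsClosed (A : Set C(X, ℂ)))
    {F : ℕ → C(X, ℂ)} {a : C(X, ℂ)} (hs : HasSum F a) (hmem : ∀ n, F n ∈ A) : a ∈ A := by
  refine hA.mem_of_tendsto hs (Filter.Eventually.of_forall fun s => ?_)
  exact Subalgebra.sum_mem A fun n _ => hmem n

lemma exp_mem (A : Subalgebra ℂ C(X, ℂ)) (hA : IsClosed (A : Set C(X, ℂ)))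
    {w : C(X, ℂ)} (hw : w ∈ A) : NormedSpace.exp w ∈ A := by
  refine mem_of_hasSum A hA (NormedSpace.exp_series_hasSum_exp' (𝕂 := ℂ) w) fun n => ?_
  exact Subalgebra.smul_mem A (Subalgebra.pow_mem A hw n) _

lemma exp_apply_cm (w : C(X, ℂ)) (x : X) : (NormedSpace.exp w) x = Complex.exp (w x) := by
  rw [Complex.exp_eq_exp_ℂ]
  exact ((NormedSpace.map_exp (ContinuousMap.evalAlgHom ℂ ℂ x)
    (ContinuousEvalConst.continuous_eval_const x) w) : _)

lemma hasSum_apply_cm {F : ℕ → C(X, ℂ)} {a : C(X, ℂ)} (hs : HasSum F a) (x : X) :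
    HasSum (fun n => F n x) (a x) := by
  have := hs.map (ContinuousMap.evalCLM (R := ℂ) x) (ContinuousMap.evalCLM (R := ℂ) x).continuous
  exact this

lemma sum_half_pow (n : ℕ) : ∑ j ∈ Finset.range n, ((2:ℝ)^(j+1))⁻¹ = 1 - ((2:ℝ)^n)⁻¹ := by
  induction n with
  | zero => simp
  | succ n ih =>
    rw [Finset.sum_range_succ, ih]
    have h2 : (2:ℝ)^(n+1) = 2^n * 2 := by ring
    field_simp
    ring

lemma half_pow_eq (j : ℕ) : ((2:ℝ)^(j+1))⁻¹ = (1/2) * (1/2)^j := by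
  rw [pow_succ]; field_simp; rw [← mul_pow]; norm_num

lemma summable_half_pow : Summable (fun j : ℕ => ((2:ℝ)^(j+1))⁻¹) := by
  rw [funext half_pow_eq]
  exact (summable_geometric_of_lt_one (by norm_num) (by norm_num)).mul_left _

lemma tsum_half_pow : ∑' j : ℕ, ((2:ℝ)^(j+1))⁻¹ = 1 := by
  rw [tsum_congr half_pow_eq, tsum_mul_left,
    tsum_geometric_of_lt_one (by norm_num) (by norm_num)]
  norm_num

set_option maxHeartbeats 2000000 in
lemma key (A : Subalgebra ℂ C(X, ℂ)) (hA : IsClosed (A : Set C(X, ℂ)))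
    (fc gc : C(X,ℂ)) (hfA : fc ∈ A) (hgA : gc ∈ A)
    (hf : Ranπ fc = {1}) (hg : Ranπ gc = {1}) (x₀ : X)
    (hx₀ : fc x₀ = 1) (hgx : gc x₀ ≠ 1) :
    ∃ (U : C(X,ℂ)) (x₁ : X), U ∈ A ∧ Ranπ U = {1} ∧ fc x₁ = 1 ∧ U x₁ = 1 ∧
      ∀ y, gc y = 1 → U y ≠ 1 := by
  classical
  -- the function k: k x₀ = 1, k = 0 on the peak set of g
  set k : C(X,ℂ) := ((gc x₀) - 1)⁻¹ • (gc - 1) with hk_def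
  have hkA : k ∈ A := A.smul_mem (A.sub_mem hgA A.one_mem) _
  have hkx₀ : k x₀ = 1 := by
    simp only [hk_def, ContinuousMap.smul_apply, ContinuousMap.sub_apply,
      ContinuousMap.one_apply, smul_eq_mul]
    exact inv_mul_cancel₀ (sub_ne_zero.mpr hgx)
  have hk0 : ∀ y, gc y = 1 → k y = 0 := by
    intro y hy
    simp [hk_def, ContinuousMap.smul_apply, ContinuousMap.sub_apply, hy]
  set ρ : X → ℝ := fun x => (k x).re with hρ_def
  have hρc : Continuous ρ := Complex.continuous_re.comp k.continuous
  -- the peak set of f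
  set Lf : Set X := {x | fc x = 1} with hLf_def
  have hLfc : IsCompact Lf := (isClosed_eq fc.continuous continuous_const).isCompact
  obtain ⟨x₁, hx₁Lf, hx₁max⟩ := hLfc.exists_isMaxOn ⟨x₀, hx₀⟩ hρc.continuousOn
  set m : ℝ := ρ x₁ with hm_def
  have hfx₁ : fc x₁ = 1 := hx₁Lf
  have hm1 : 1 ≤ m := by
    have := isMaxOn_iff.mp hx₁max x₀ hx₀
    simpa [hρ_def, hkx₀] using this
  -- global bound
  haveI : Nonempty X := ⟨x₀⟩
  obtain ⟨x₂, -, hx₂⟩ := isCompact_univ.exists_isMaxOn ⟨x₀, trivial⟩ hρc.continuousOn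
  set R : ℝ := max 1 (ρ x₂ - m) with hR_def
  have hR1 : 1 ≤ R := le_max_left _ _
  have hR0 : 0 < R := lt_of_lt_of_le one_pos hR1
  have hRb : ∀ x, ρ x - m ≤ R := fun x =>
    le_trans (by linarith [isMaxOn_iff.mp hx₂ x (Set.mem_univ x)]) (le_max_right _ _)
  set t : ℝ := (2*R)⁻¹ with ht_def
  have ht0 : 0 < t := by positivity
  -- the basic peaking function v
  set v : C(X,ℂ) := (2⁻¹ : ℂ) • (1 + fc) with hv_def
  have hvA : v ∈ A := A.smul_mem (A.add_mem A.one_mem hfA) _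
  have hv_apply : ∀ x, v x = 2⁻¹ * (1 + fc x) := fun x => by
    rw [hv_def]
    rw [ContinuousMap.smul_apply, ContinuousMap.add_apply, ContinuousMap.one_apply,
      smul_eq_mul]
  have hv_le : ∀ x, Complex.abs (v x) ≤ 1 := by
    intro x
    rw [hv_apply]
    rw [map_mul]
    have h1 : Complex.abs (1 + fc x) ≤ 2 := by
      calc Complex.abs (1 + fc x) ≤ Complex.abs 1 + Complex.abs (fc x) :=
        Complex.abs.add_le _ _
      _ ≤ 2 := by have := peak_abs_le fc hf x; simp at this ⊢; linarith
    have h2 : Complex.abs (2⁻¹ : ℂ) = 2⁻¹ := by simp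
    rw [h2]; linarith
  have hv_one : ∀ x, fc x = 1 → v x = 1 := by
    intro x hx; rw [hv_apply, hx]; norm_num
  have hv_eq : ∀ x, Complex.abs (v x) = 1 → fc x = 1 := by
    intro x hx
    rw [hv_apply, map_mul] at hx
    have h2 : Complex.abs (2⁻¹ : ℂ) = 2⁻¹ := by simp
    rw [h2] at hx
    have h3 : Complex.abs (1 + fc x) = 2 := by linarith
    have := disc_one (peak_abs_le fc hf x) h3
    exact this
  -- the exceptional sets
  set F : ℕ → Set X := fun n => {x | m + R * ((2:ℝ)^(n+1))⁻¹ ≤ ρ x} with hF_def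
  have hFc : ∀ n, IsCompact (F n) :=
    fun n => (isClosed_le continuous_const hρc).isCompact
  have hFLf : ∀ n, ∀ x ∈ F n, x ∉ Lf := by
    intro n x hx hxLf
    have h1 : ρ x ≤ m := isMaxOn_iff.mp hx₁max x hxLf
    have h2 : m + R * ((2:ℝ)^(n+1))⁻¹ ≤ ρ x := hx
    have h3 : 0 < R * ((2:ℝ)^(n+1))⁻¹ := by positivity
    linarith
  have hFv : ∀ n, ∃ M : ℕ, ∀ x ∈ F n, (Complex.abs (v x))^M ≤ 1/2 := by
    intro n
    rcases (F n).eq_empty_or_nonempty with he | hne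
    · exact ⟨0, fun x hx => absurd hx (by simp [he])⟩
    obtain ⟨xc, hxc, hmax⟩ := (hFc n).exists_isMaxOn hne
      (Complex.continuous_abs.comp v.continuous).continuousOn
    have hc1 : Complex.abs (v xc) < 1 := by
      rcases lt_or_eq_of_le (hv_le xc) with h | h
      · exact h
      · exact absurd (hv_eq xc h) (hFLf n xc hxc)
    obtain ⟨M, hM⟩ := exists_pow_lt_of_lt_one (by norm_num : (0:ℝ) < 1/2) hc1
    refine ⟨M, fun x hx => ?_⟩
    calc (Complex.abs (v x))^M ≤ (Complex.abs (v xc))^M :=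
          pow_le_pow_left₀ (Complex.abs.nonneg _) (isMaxOn_iff.mp hmax x hx) M
    _ ≤ 1/2 := le_of_lt hM
  choose M hM using hFv
  -- the series h
  set G : ℕ → C(X,ℂ) := fun n => ((((2:ℝ)^(n+1))⁻¹ : ℝ) : ℂ) • v ^ (M n) with hG_def
  have hG_apply : ∀ n x, G n x = ((((2:ℝ)^(n+1))⁻¹ : ℝ) : ℂ) * (v x) ^ (M n) := by
    intro n x
    simp [hG_def, ContinuousMap.smul_apply, ContinuousMap.pow_apply, smul_eq_mul]
  have hG_abs : ∀ n x, Complex.abs (G n x) ≤ ((2:ℝ)^(n+1))⁻¹ := by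
    intro n x
    rw [hG_apply, map_mul, map_pow]
    have h1 : Complex.abs ((((2:ℝ)^(n+1))⁻¹ : ℝ) : ℂ) = ((2:ℝ)^(n+1))⁻¹ := by
      rw [Complex.abs_ofReal, abs_of_nonneg (by positivity)]
    rw [h1]
    have h2 : (Complex.abs (v x))^(M n) ≤ 1 := pow_le_one₀ (Complex.abs.nonneg _) (hv_le x)
    nlinarith [inv_nonneg.mpr (pow_nonneg (by norm_num : (0:ℝ) ≤ 2) (n+1))]
  have hG_norm : ∀ n, ‖G n‖ ≤ ((2:ℝ)^(n+1))⁻¹ := by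
    intro n
    exact ContinuousMap.norm_le _ (by positivity) |>.mpr (hG_abs n)
  have hGsum : Summable G := by
    refine Summable.of_norm_bounded summable_half_pow hG_norm
  set h : C(X,ℂ) := ∑' n, G n with hh_def
  have hhsum : HasSum G h := hGsum.hasSum
  have hhA : h ∈ A := mem_of_hasSum A hA hhsum
    (fun n => A.smul_mem (A.pow_mem hvA _) _)
  have hh_apply : ∀ x, HasSum (fun n => G n x) (h x) := fun x => hasSum_apply_cm hhsum x
  -- h x₁ = 1
  have hhx₁ : h x₁ = 1 := by
    have h1 : ∀ n, G n x₁ = ((((2:ℝ)^(n+1))⁻¹ : ℝ) : ℂ) := by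
      intro n
      rw [hG_apply, hv_one x₁ hfx₁, one_pow, mul_one]
    have h2 : HasSum (fun n => ((((2:ℝ)^(n+1))⁻¹ : ℝ) : ℂ)) ((1:ℝ) : ℂ) := by
      have h3 : HasSum (fun j : ℕ => ((2:ℝ)^(j+1))⁻¹) 1 := by
        have := summable_half_pow.hasSum
        rwa [tsum_half_pow] at this
      exact h3.map Complex.ofRealCLM Complex.ofRealCLM.continuous
    have h4 := hh_apply x₁
    rw [funext h1] at h4
    have := h4.unique h2
    simpa using this
  -- abs bound on h pointwise, with exponential weight
  have hsumnorm : ∀ x, Summable (fun n => Complex.abs (G n x)) := fun x =>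
    Summable.of_nonneg_of_le (fun n => Complex.abs.nonneg _) (fun n => hG_abs n x)
      summable_half_pow
  have habs_h_le : ∀ x, Complex.abs (h x) ≤ ∑' n, Complex.abs (G n x) := by
    intro x
    have hsn : Summable fun n => ‖G n x‖ := by
      simpa using hsumnorm x
    calc Complex.abs (h x) = ‖h x‖ := (Complex.norm_eq_abs _).symm
    _ = ‖∑' n, G n x‖ := by rw [(hh_apply x).tsum_eq]
    _ ≤ ∑' n, ‖G n x‖ := norm_tsum_le_tsum_norm hsn
    _ = ∑' n, Complex.abs (G n x) := by simp
  have habs_h_le_one : ∀ x, Complex.abs (h x) ≤ 1 := by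
    intro x
    refine le_trans (habs_h_le x) ?_
    calc ∑' n, Complex.abs (G n x) ≤ ∑' n, ((2:ℝ)^(n+1))⁻¹ :=
      Summable.tsum_le_tsum (fun n => hG_abs n x) (hsumnorm x) summable_half_pow
    _ = 1 := tsum_half_pow
  -- the key pointwise bound
  have hb : ∀ x, Complex.abs (h x) * Real.exp (t * (ρ x - m)) ≤ 1 := by
    intro x
    rcases le_or_gt (ρ x) m with hxm | hxm
    · have he : Real.exp (t * (ρ x - m)) ≤ 1 := by
        rw [Real.exp_le_one_iff]
        nlinarith
      nlinarith [habs_h_le_one x, Complex.abs.nonneg (h x),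
        Real.exp_pos (t * (ρ x - m))]
    · have hd0 : 0 < ρ x - m := by linarith
      set d : ℝ := ρ x - m with hd_def
      have hex : ∃ n : ℕ, R * ((2:ℝ)^(n+1))⁻¹ ≤ d := by
        obtain ⟨n, hn⟩ := pow_unbounded_of_one_lt (R / d) (by norm_num : (1:ℝ) < 2)
        refine ⟨n, ?_⟩
        rw [div_lt_iff₀ hd0] at hn
        have h2 : (2:ℝ)^n ≤ 2^(n+1) := by
          apply pow_le_pow_right₀ (by norm_num) (Nat.le_succ n)
        have hpos : (0:ℝ) < 2^(n+1) := by positivity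
        have h3 : R ≤ d * 2^(n+1) := by nlinarith
        calc R * ((2:ℝ)^(n+1))⁻¹ ≤ (d * 2^(n+1)) * ((2:ℝ)^(n+1))⁻¹ :=
          mul_le_mul_of_nonneg_right h3 (by positivity)
        _ = d := by field_simp
      set n₀ : ℕ := Nat.find hex with hn₀_def
      have hn₀ : R * ((2:ℝ)^(n₀+1))⁻¹ ≤ d := Nat.find_spec hex
      have hmin : d ≤ R * ((2:ℝ)^n₀)⁻¹ := by
        by_cases h0 : n₀ = 0
        · rw [h0]
          have := hRb x
          rw [hd_def]
          simpa using this
        · have hp := Nat.find_min hex (show n₀ - 1 < n₀ by omega)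
          rw [not_le] at hp
          have he : n₀ - 1 + 1 = n₀ := by omega
          rw [he] at hp
          exact le_of_lt hp
      have hxF : ∀ j, n₀ ≤ j → x ∈ F j := by
        intro j hj
        have h1 : ((2:ℝ)^(j+1))⁻¹ ≤ ((2:ℝ)^(n₀+1))⁻¹ := by
          apply inv_anti₀ (by positivity)
          apply pow_le_pow_right₀ (by norm_num) (by omega)
        have h2 : R * ((2:ℝ)^(j+1))⁻¹ ≤ d :=
          le_trans (mul_le_mul_of_nonneg_left h1 (le_of_lt hR0)) hn₀
        show m + R * ((2:ℝ)^(j+1))⁻¹ ≤ ρ x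
        have : ρ x = m + d := by rw [hd_def]; ring
        linarith
      -- split the sum
      have hsplit := Summable.sum_add_tsum_nat_add (f := fun n => Complex.abs (G n x)) n₀ (hsumnorm x)
      have hhead : ∑ i ∈ Finset.range n₀, Complex.abs (G i x) ≤ 1 - ((2:ℝ)^n₀)⁻¹ := by
        rw [← sum_half_pow n₀]
        exact Finset.sum_le_sum fun i _ => hG_abs i x
      have htail_term : ∀ i : ℕ, Complex.abs (G (i + n₀) x) ≤ ((2:ℝ)^(i+n₀+1))⁻¹ * (1/2) := by
        intro i
        rw [hG_apply, map_mul, map_pow]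
        have h1 : Complex.abs ((((2:ℝ)^(i+n₀+1))⁻¹ : ℝ) : ℂ) = ((2:ℝ)^(i+n₀+1))⁻¹ := by
          rw [Complex.abs_ofReal, abs_of_nonneg (by positivity)]
        rw [h1]
        apply mul_le_mul_of_nonneg_left _ (by positivity)
        exact hM (i+n₀) x (hxF (i+n₀) (by omega))
      have htailsum : Summable (fun i : ℕ => ((2:ℝ)^(i+n₀+1))⁻¹ * (1/2)) := by
        have := (summable_nat_add_iff (f := fun n => ((2:ℝ)^(n+1))⁻¹) n₀).mpr summable_half_pow
        exact this.mul_right _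
      have htail : ∑' i : ℕ, Complex.abs (G (i + n₀) x) ≤ ((2:ℝ)^n₀)⁻¹ * (1/2) := by
        have h1 : ∑' i : ℕ, ((2:ℝ)^(i+n₀+1))⁻¹ = ((2:ℝ)^n₀)⁻¹ := by
          have h2 := Summable.sum_add_tsum_nat_add (f := fun n => ((2:ℝ)^(n+1))⁻¹) n₀ summable_half_pow
          rw [tsum_half_pow, sum_half_pow] at h2
          linarith
        calc ∑' i : ℕ, Complex.abs (G (i + n₀) x)
            ≤ ∑' i : ℕ, ((2:ℝ)^(i+n₀+1))⁻¹ * (1/2) :=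
          Summable.tsum_le_tsum htail_term ((summable_nat_add_iff n₀).mpr (hsumnorm x)) htailsum
        _ = (∑' i : ℕ, ((2:ℝ)^(i+n₀+1))⁻¹) * (1/2) := tsum_mul_right
        _ = ((2:ℝ)^n₀)⁻¹ * (1/2) := by rw [h1]
      set s : ℝ := ((2:ℝ)^(n₀+1))⁻¹ with hs_def
      have hs_eq : ((2:ℝ)^n₀)⁻¹ * (1/2) = s := by
        rw [hs_def, pow_succ]
        field_simp
      have hs_pos : 0 < s := by positivity
      have hs_half : s ≤ 1/2 := by
        rw [hs_def]
        have : (2:ℝ) ≤ 2^(n₀+1) := by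
          calc (2:ℝ) = 2^1 := by norm_num
          _ ≤ 2^(n₀+1) := pow_le_pow_right₀ (by norm_num) (by omega)
        rw [inv_le_comm₀ (by positivity) (by norm_num)]
        linarith
      have habs_hx : Complex.abs (h x) ≤ 1 - s := by
        refine le_trans (habs_h_le x) ?_
        rw [← hsplit]
        have := hs_eq
        linarith
      have htd : t * d ≤ s := by
        have h1 : t * d ≤ t * (R * ((2:ℝ)^n₀)⁻¹) :=
          mul_le_mul_of_nonneg_left hmin (le_of_lt ht0)
        have h2 : t * (R * ((2:ℝ)^n₀)⁻¹) = s := by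
          rw [ht_def, hs_def, pow_succ]
          field_simp
        exact le_of_le_of_eq h1 h2
      have hexp : Real.exp (t * d) ≤ Real.exp s := Real.exp_le_exp.mpr htd
      have hconv : (1 - s) * Real.exp s ≤ 1 := by
        have h1 : 1 - s ≤ Real.exp (-s) := by
          have := Real.add_one_le_exp (-s)
          linarith
        have h2 : (1 - s) * Real.exp s ≤ Real.exp (-s) * Real.exp s :=
          mul_le_mul_of_nonneg_right h1 (le_of_lt (Real.exp_pos s))
        rw [← Real.exp_add] at h2
        simpa using h2
      calc Complex.abs (h x) * Real.exp (t * d)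
          ≤ (1 - s) * Real.exp s := by
            apply mul_le_mul habs_hx hexp (le_of_lt (Real.exp_pos _))
            linarith
      _ ≤ 1 := hconv
  -- the exponential factor
  set w0 : C(X,ℂ) := ((t:ℝ):ℂ) • k - (((t*m : ℝ)):ℂ) • (1 : C(X,ℂ)) with hw0_def
  have hw0A : w0 ∈ A := A.sub_mem (A.smul_mem hkA _) (A.smul_mem A.one_mem _)
  have hw0_apply : ∀ x, w0 x = (t:ℂ) * k x - ((t*m:ℝ):ℂ) := fun x => by
    rw [hw0_def]
    simp [ContinuousMap.sub_apply, ContinuousMap.smul_apply, ContinuousMap.one_apply,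
      smul_eq_mul]
  have hw0_re : ∀ x, (w0 x).re = t * (ρ x - m) := by
    intro x
    rw [hw0_apply, Complex.sub_re, Complex.re_ofReal_mul, Complex.ofReal_re]
    rw [hρ_def]
    ring
  set q : C(X,ℂ) := NormedSpace.exp w0 with hq_def
  have hqA : q ∈ A := exp_mem A hA hw0A
  have hq_apply : ∀ x, q x = Complex.exp (w0 x) := fun x => exp_apply_cm w0 x
  have hq_abs : ∀ x, Complex.abs (q x) = Real.exp (t * (ρ x - m)) := by
    intro x
    rw [hq_apply, Complex.abs_exp, hw0_re]
  -- the function u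
  set u : C(X,ℂ) := h * q with hu_def
  have huA : u ∈ A := A.mul_mem hhA hqA
  have hu_abs : ∀ x, Complex.abs (u x) = Complex.abs (h x) * Real.exp (t * (ρ x - m)) := by
    intro x
    rw [hu_def, ContinuousMap.mul_apply, map_mul, hq_abs]
  have hu_le : ∀ x, Complex.abs (u x) ≤ 1 := fun x => by rw [hu_abs]; exact hb x
  set ω : ℂ := u x₁ with hω_def
  have hρx₁ : ρ x₁ = m := rfl
  have habs_ω : Complex.abs ω = 1 := by
    rw [hω_def, hu_abs, hhx₁, hρx₁]
    simp
  have hω0 : ω ≠ 0 := by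
    intro h0
    rw [h0] at habs_ω
    simp at habs_ω
  have hu_small : ∀ y, gc y = 1 → Complex.abs (u y) < 1 := by
    intro y hy
    have hρy : ρ y = 0 := by
      have hky : k y = 0 := hk0 y hy
      show (k y).re = 0
      rw [hky]; simp
    rw [hu_abs, hρy]
    have h1 : Real.exp (t * (0 - m)) < 1 := by
      rw [Real.exp_lt_one_iff]
      nlinarith
    nlinarith [habs_h_le_one y, Complex.abs.nonneg (h y),
      Real.exp_pos (t * (0 - m))]
  -- the final peaking function U
  set U : C(X,ℂ) := (2⁻¹ : ℂ) • (1 + (ω⁻¹ • u)) with hU_def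
  have hUA : U ∈ A := A.smul_mem (A.add_mem A.one_mem (A.smul_mem huA _)) _
  have hU_apply : ∀ x, U x = 2⁻¹ * (1 + ω⁻¹ * u x) := fun x => by
    rw [hU_def]
    rw [ContinuousMap.smul_apply, ContinuousMap.add_apply, ContinuousMap.smul_apply,
      ContinuousMap.one_apply, smul_eq_mul, smul_eq_mul]
  have habs_inv_u : ∀ x, Complex.abs (ω⁻¹ * u x) ≤ 1 := by
    intro x
    rw [map_mul, map_inv₀, habs_ω]
    simpa using hu_le x
  have hU_le : ∀ x, Complex.abs (U x) ≤ 1 := by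
    intro x
    rw [hU_apply, map_mul]
    have h2 : Complex.abs (2⁻¹ : ℂ) = 2⁻¹ := by simp
    rw [h2]
    have h1 : Complex.abs (1 + ω⁻¹ * u x) ≤ 2 := by
      calc Complex.abs (1 + ω⁻¹ * u x) ≤ Complex.abs 1 + Complex.abs (ω⁻¹ * u x) :=
        Complex.abs.add_le _ _
      _ ≤ 2 := by
          have := habs_inv_u x
          have h9 : Complex.abs (1:ℂ) = 1 := by simp
          linarith
    linarith
  have hUx₁ : U x₁ = 1 := by
    rw [hU_apply, ← hω_def, inv_mul_cancel₀ hω0]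
    norm_num
  have hU_eq1 : ∀ x, Complex.abs (U x) = 1 → (U x = 1 ∧ Complex.abs (u x) = 1) := by
    intro x hx
    rw [hU_apply, map_mul] at hx
    have h2 : Complex.abs (2⁻¹ : ℂ) = 2⁻¹ := by simp
    rw [h2] at hx
    have h3 : Complex.abs (1 + ω⁻¹ * u x) = 2 := by linarith
    have h4 := disc_one (habs_inv_u x) h3
    constructor
    · rw [hU_apply, h4]
      norm_num
    · have h5 : u x = ω := ((inv_mul_eq_one₀ hω0).mp h4).symm
      rw [h5, habs_ω]
  have hUnorm : ‖U‖ = 1 := by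
    apply le_antisymm
    · exact (ContinuousMap.norm_le _ zero_le_one).mpr (fun x => by
        simpa using hU_le x)
    · have := ContinuousMap.norm_coe_le_norm U x₁
      rw [hUx₁] at this
      simpa using this
  have hRanU : Ranπ U = {1} := by
    ext z
    constructor
    · rintro ⟨⟨x, rfl⟩, habs⟩
      rw [hUnorm] at habs
      exact (hU_eq1 x habs).1
    · rintro rfl
      exact ⟨⟨x₁, hUx₁⟩, by simp [hUnorm]⟩
  refine ⟨U, x₁, hUA, hRanU, hfx₁, hUx₁, ?_⟩
  intro y hy hUy
  have h1 : Complex.abs (U y) = 1 := by rw [hUy]; simp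
  have h2 := (hU_eq1 y h1).2
  have h3 := hu_small y hy
  linarith


end helpers


theorem stmt14 {X : Type*} [TopologicalSpace X] [CompactSpace X] [T2Space X]
    (A : Subalgebra ℂ C(X, ℂ)) (hA : IsClosed (A : Set C(X, ℂ)))
    (hAsep : ∀ x y : X, x ≠ y → ∃ f ∈ A, f x ≠ f y)
    (f g : A) (hf : Ranπ (f : C(X, ℂ)) = {1}) (hg : Ranπ (g : C(X, ℂ)) = {1}) :
    {x : X | (f : C(X, ℂ)) x = 1} ⊆ {x : X | (g : C(X, ℂ)) x = 1} ↔
      ∀ u : A, Ranπ (u : C(X, ℂ)) = {1} → (1 : ℂ) ∈ Ranπ ((f * u : A) : C(X, ℂ)) →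
        (1 : ℂ) ∈ Ranπ ((u * g : A) : C(X, ℂ)) := by
  constructor
  · -- forward direction
    intro hsub u hu h1
    obtain ⟨⟨x, hx⟩, -⟩ := h1
    have hcoe : ((f * u : A) : C(X,ℂ)) = (f : C(X,ℂ)) * (u : C(X,ℂ)) := rfl
    rw [hcoe, ContinuousMap.mul_apply] at hx
    have habs : Complex.abs ((f : C(X,ℂ)) x) * Complex.abs ((u : C(X,ℂ)) x) = 1 := by
      rw [← map_mul, hx]; simp
    have haf := peak_abs_le _ hf x
    have hau := peak_abs_le _ hu x
    have haf0 := Complex.abs.nonneg ((f : C(X,ℂ)) x)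
    have hau0 := Complex.abs.nonneg ((u : C(X,ℂ)) x)
    have h2 : Complex.abs ((f : C(X,ℂ)) x) = 1 := by nlinarith
    have h3 : Complex.abs ((u : C(X,ℂ)) x) = 1 := by nlinarith
    have hfx : (f : C(X,ℂ)) x = 1 := peak_eq_one _ hf x h2
    have hux : (u : C(X,ℂ)) x = 1 := peak_eq_one _ hu x h3
    have hgx : (g : C(X,ℂ)) x = 1 := hsub hfx
    have hcoe2 : ((u * g : A) : C(X,ℂ)) = (u : C(X,ℂ)) * (g : C(X,ℂ)) := rfl
    have hval : ((u * g : A) : C(X,ℂ)) x = 1 := by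
      rw [hcoe2, ContinuousMap.mul_apply, hux, hgx, one_mul]
    refine ⟨⟨x, hval⟩, ?_⟩
    have hnorm : ‖((u * g : A) : C(X,ℂ))‖ = 1 := by
      apply le_antisymm
      · have hmul := norm_mul_le (u : C(X,ℂ)) (g : C(X,ℂ))
        rw [peak_norm _ hu, peak_norm _ hg] at hmul
        rw [hcoe2]
        simpa using hmul
      · have := ContinuousMap.norm_coe_le_norm ((u * g : A) : C(X,ℂ)) x
        rw [hval] at this
        simpa using this
    rw [hnorm]; simp
  · -- backward direction
    intro H x₀ hx₀
    show (g : C(X,ℂ)) x₀ = 1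
    by_contra hgx
    obtain ⟨U, x₁, hUA, hRanU, hfx₁, hUx₁, hUy⟩ :=
      key A hA (f : C(X,ℂ)) (g : C(X,ℂ)) f.2 g.2 hf hg x₀ hx₀ hgx
    have h1 : (1:ℂ) ∈ Ranπ ((f * ⟨U, hUA⟩ : A) : C(X,ℂ)) := by
      have hcoe : ((f * ⟨U, hUA⟩ : A) : C(X,ℂ)) = (f : C(X,ℂ)) * U := rfl
      have hval : ((f * ⟨U, hUA⟩ : A) : C(X,ℂ)) x₁ = 1 := by
        rw [hcoe, ContinuousMap.mul_apply, hfx₁, hUx₁, one_mul]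
      refine ⟨⟨x₁, hval⟩, ?_⟩
      have hnorm : ‖((f * ⟨U, hUA⟩ : A) : C(X,ℂ))‖ = 1 := by
        apply le_antisymm
        · have hmul := norm_mul_le (f : C(X,ℂ)) U
          rw [peak_norm _ hf, peak_norm _ hRanU] at hmul
          rw [hcoe]
          simpa using hmul
        · have := ContinuousMap.norm_coe_le_norm ((f * ⟨U, hUA⟩ : A) : C(X,ℂ)) x₁
          rw [hval] at this
          simpa using this
      rw [hnorm]; simp
    obtain ⟨⟨y, hy⟩, -⟩ := H ⟨U, hUA⟩ hRanU h1
    have hy' : U y * (g : C(X,ℂ)) y = 1 := hy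
    have habs : Complex.abs (U y) * Complex.abs ((g : C(X,ℂ)) y) = 1 := by
      rw [← map_mul, hy']; simp
    have haU := peak_abs_le _ hRanU y
    have hag := peak_abs_le _ hg y
    have haU0 := Complex.abs.nonneg (U y)
    have hag0 := Complex.abs.nonneg ((g : C(X,ℂ)) y)
    have h2 : Complex.abs ((g : C(X,ℂ)) y) = 1 := by nlinarith
    have hgy : (g : C(X,ℂ)) y = 1 := peak_eq_one _ hg y h2
    have hUy1 : U y = 1 := by
      rw [hgy, mul_one] at hy'
      exact hy'
    exact hUy y hgy hUy1
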